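/- In any finite congestion game, a pure-strategy Nash equilibrium exists. Specifically, any joint action maximizing Rosenthal's potential Φ(a) = Σ_{f ∈ F} Σ_{k=1}^{n^f(a)} r^f(k) is a pure Nash equilibrium, because a unilateral deviation by player i changes her reward by exactly the change in Φ. -/

import Mathlib

open Finset Function

/-- Number of players selecting facility `f` under joint action `a`. -/
def nfC {m : ℕ} {Fac : Type*} [Fintype Fac] [DecidableEq Fac]
    (f : Fac) (a : Fin m → Finset Fac) : ℕ :=
  (Finset.univ.filter (fun j => f ∈ a j)).card

/-- Reward of player `i`: `Σ_{f ∈ a_i} r^f(n^f(a))`. -/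
def payC {m : ℕ} {Fac : Type*} [Fintype Fac] [DecidableEq Fac]
    (rf : Fac → ℕ → ℝ) (a : Fin m → Finset Fac) (i : Fin m) : ℝ :=
  ∑ f ∈ a i, rf f (nfC f a)

/-- Rosenthal's potential `Φ(a) = Σ_f Σ_{k=1}^{n^f(a)} r^f(k)`. -/
def rosenthal {m : ℕ} {Fac : Type*} [Fintype Fac] [DecidableEq Fac]
    (rf : Fac → ℕ → ℝ) (a : Fin m → Finset Fac) : ℝ :=
  ∑ f : Fac, ∑ k ∈ Finset.Icc 1 (nfC f a), rf f k

/-- in any finite congestion game, a unilateral deviation changes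
the deviating player's reward by exactly the change in Rosenthal's potential;
hence any joint action maximizing the potential (over the action sets `𝒜 i`)
is a pure Nash equilibrium, and in particular a pure NE exists. -/
theorem stmt19 {m : ℕ} {Fac : Type*} [Fintype Fac] [DecidableEq Fac]
    (𝒜 : Fin m → Finset (Finset Fac)) (h𝒜 : ∀ i, (𝒜 i).Nonempty)
    (rf : Fac → ℕ → ℝ) :
    (∀ (a : Fin m → Finset Fac) (i : Fin m) (b : Finset Fac),
        payC rf (Function.update a i b) i - payC rf a i
          = rosenthal rf (Function.update a i b) - rosenthal rf a) ∧
    (∀ a : Fin m → Finset Fac, (∀ i, a i ∈ 𝒜 i) →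
        (∀ a' : Fin m → Finset Fac, (∀ i, a' i ∈ 𝒜 i) →
            rosenthal rf a' ≤ rosenthal rf a) →
        ∀ i, ∀ b ∈ 𝒜 i, payC rf (Function.update a i b) i ≤ payC rf a i) ∧
    (∃ a : Fin m → Finset Fac, (∀ i, a i ∈ 𝒜 i) ∧
        ∀ i, ∀ b ∈ 𝒜 i, payC rf (Function.update a i b) i ≤ payC rf a i) := by
  classical
  have key : ∀ (a : Fin m → Finset Fac) (i : Fin m) (b : Finset Fac),
      payC rf (Function.update a i b) i - payC rf a i
        = rosenthal rf (Function.update a i b) - rosenthal rf a := by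
    intro a i b
    set cnt : Fac → ℕ := fun f => ((univ.erase i).filter (fun j => f ∈ a j)).card with hcnt
    have hn : ∀ (c : Finset Fac) (f : Fac),
        nfC f (Function.update a i c) = (if f ∈ c then 1 else 0) + cnt f := by
      intro c f
      rw [nfC, ← Finset.insert_erase (Finset.mem_univ i), Finset.filter_insert]
      have h1 : Finset.filter (fun j => f ∈ Function.update a i c j) (univ.erase i)
          = Finset.filter (fun j => f ∈ a j) (univ.erase i) := by
        apply Finset.filter_congr
        intro j hj
        simp [Function.update_of_ne (Finset.ne_of_mem_erase hj)]
      by_cases hf : f ∈ c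
      · rw [if_pos hf, Function.update_self, h1]
        simp [hf, hcnt, Finset.card_insert_of_notMem, add_comm]
      · simp [hf, h1, hcnt]
    have hna : ∀ f, nfC f a = (if f ∈ a i then 1 else 0) + cnt f := by
      intro f
      have := hn (a i) f
      rwa [Function.update_eq_self] at this
    have hpay : ∀ (c : Finset Fac),
        payC rf (Function.update a i c) i = ∑ f ∈ c, rf f (1 + cnt f) := by
      intro c
      rw [payC, Function.update_self]
      apply Finset.sum_congr rfl
      intro f hf
      rw [hn c f, if_pos hf]
    have hpaya : payC rf a i = ∑ f ∈ a i, rf f (1 + cnt f) := by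
      have := hpay (a i); rwa [Function.update_eq_self] at this
    have hros : rosenthal rf (Function.update a i b) - rosenthal rf a
        = ∑ f : Fac, ((if f ∈ b then rf f (1 + cnt f) else 0)
            - (if f ∈ a i then rf f (1 + cnt f) else 0)) := by
      rw [rosenthal, rosenthal, ← Finset.sum_sub_distrib]
      apply Finset.sum_congr rfl
      intro f _
      rw [hn b f, hna f]
      have hsucc : ∀ n : ℕ, ∑ k ∈ Finset.Icc 1 (1 + n), rf f k
          = (∑ k ∈ Finset.Icc 1 n, rf f k) + rf f (1 + n) := by
        intro n
        rw [add_comm 1 n]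
        exact Finset.sum_Icc_succ_top (Nat.le_add_left 1 n) _
      by_cases hb : f ∈ b <;> by_cases ha : f ∈ a i <;> simp [hb, ha, hsucc]
    have hsumb : ∀ (c : Finset Fac),
        (∑ f : Fac, (if f ∈ c then rf f (1 + cnt f) else 0)) = ∑ f ∈ c, rf f (1 + cnt f) := by
      intro c
      rw [Finset.sum_ite_mem, Finset.univ_inter]
    rw [hpay b, hpaya, hros, Finset.sum_sub_distrib, hsumb, hsumb]
  refine ⟨key, ?_, ?_⟩
  · intro a ha hmax i b hb
    have hmem : ∀ j, Function.update a i b j ∈ 𝒜 j := by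
      intro j
      rcases eq_or_ne j i with rfl | h
      · simpa using hb
      · simpa [Function.update_of_ne h] using ha j
    have hle := hmax (Function.update a i b) hmem
    have h := key a i b
    linarith
  · obtain ⟨a, hamem, hmax⟩ := Finset.exists_max_image (Fintype.piFinset 𝒜)
      (rosenthal rf) ⟨fun i => (h𝒜 i).choose, by
        simp only [Fintype.mem_piFinset]; exact fun i => (h𝒜 i).choose_spec⟩
    refine ⟨a, fun i => (Fintype.mem_piFinset.mp hamem) i, ?_⟩
    intro i b hb
    have hmem : Function.update a i b ∈ Fintype.piFinset 𝒜 := by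
      rw [Fintype.mem_piFinset]
      intro j
      rcases eq_or_ne j i with rfl | h
      · simpa using hb
      · simpa [Function.update_of_ne h] using (Fintype.mem_piFinset.mp hamem) j
    have hle := hmax _ hmem
    have h := key a i b
    linarith
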